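/- arXiv:1602.06288 — 3 statements merged into one kernel-verified Lean document; each statement's English description precedes it below -/
import Mathlib

section
/- Let 0 < q < p ≤ 1 and n ≥ 1. For all x ∈ [0,1], the (p,q)-Bernstein basis sums to one: (1/p^{n(n-1)/2}) ∑_{k=0}^{n} C_{p,q}(n,k) p^{k(k-1)/2} x^k ∏_{s=0}^{n-k-1} (p^s - q^s x) = 1, where C_{p,q}(n,k) is the (p,q)-binomial coefficient. -/
open Finset Filter

noncomputable def pqInt (p q : ℝ) (n : ℕ) : ℝ := ∑ i ∈ Finset.range n, p ^ (n - 1 - i) * q ^ i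

noncomputable def pqFact (p q : ℝ) (n : ℕ) : ℝ := ∏ j ∈ Finset.range n, pqInt p q (j + 1)

noncomputable def pqChoose (p q : ℝ) (n k : ℕ) : ℝ :=
  pqFact p q n / (pqFact p q k * pqFact p q (n - k))

noncomputable def pqBasis (p q : ℝ) (n k : ℕ) (x : ℝ) : ℝ :=
  (1 / p ^ (n * (n - 1) / 2)) * pqChoose p q n k * p ^ (k * (k - 1) / 2) * x ^ k *
    ∏ s ∈ Finset.range (n - k), (p ^ s - q ^ s * x)

noncomputable def S (p q α β : ℝ) (n : ℕ) (f : ℝ → ℝ) (x : ℝ) : ℝ :=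
  ∑ k ∈ Finset.range (n + 1),
    pqBasis p q n k x * f ((p ^ (n - k) * pqInt p q k + α) / (pqInt p q n + β))

lemma tri (k : ℕ) : (k+1)*k/2 = k*(k-1)/2 + k := by
  have h1 : (k+1)*k/2 = (k+1).choose 2 := (Nat.choose_two_right (k+1)).symm ▸ by
    simp [Nat.choose_two_right]
  rw [h1, Nat.choose_succ_succ, Nat.choose_one_right, Nat.choose_two_right, Nat.add_comm]

lemma pqInt_succ (p q : ℝ) (m : ℕ) : pqInt p q (m+1) = p * pqInt p q m + q ^ m := by
  unfold pqInt
  rw [Finset.sum_range_succ, Finset.mul_sum]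
  simp only [Nat.add_sub_cancel, Nat.sub_self, pow_zero, one_mul]
  congr 1
  apply Finset.sum_congr rfl
  intro i hi
  have h : m - i = (m - 1 - i) + 1 := by
    have := Finset.mem_range.mp hi; omega
  rw [h, pow_succ]
  ring

lemma pqInt_mul (p q : ℝ) (m : ℕ) : (p - q) * pqInt p q m = p ^ m - q ^ m := by
  induction m with
  | zero => simp [pqInt]
  | succ m ih =>
    rw [pqInt_succ]
    rw [pow_succ, pow_succ]
    linear_combination p * ih

lemma pqInt_add (p q : ℝ) (hpq : p ≠ q) (a b : ℕ) :
    pqInt p q (a + b) = q ^ b * pqInt p q a + p ^ a * pqInt p q b := by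
  have h : p - q ≠ 0 := sub_ne_zero.mpr hpq
  apply mul_left_cancel₀ h
  linear_combination pqInt_mul p q (a+b) - q^b * pqInt_mul p q a - p^a * pqInt_mul p q b

lemma pqInt_pos (p q : ℝ) (hq : 0 < q) (hqp : q < p) (m : ℕ) : 0 < pqInt p q (m+1) := by
  have hp : 0 < p := hq.trans hqp
  apply Finset.sum_pos
  · intro i _
    positivity
  · exact Finset.nonempty_range_add_one

lemma pqFact_pos (p q : ℝ) (hq : 0 < q) (hqp : q < p) (m : ℕ) : 0 < pqFact p q m := by
  apply Finset.prod_pos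
  intro j _
  exact pqInt_pos p q hq hqp j

lemma pascal (p q : ℝ) (hq : 0 < q) (hqp : q < p) (k m : ℕ) :
    pqChoose p q (k+m+2) (k+1)
      = q^(m+1) * pqChoose p q (k+m+1) k + p^(k+1) * pqChoose p q (k+m+1) (k+1) := by
  unfold pqChoose
  have e1 : k+m+2 - (k+1) = m+1 := by omega
  have e2 : k+m+1 - k = m+1 := by omega
  have e3 : k+m+1 - (k+1) = m := by omega
  rw [e1, e2, e3]
  have hI : pqInt p q (k+m+2) = q^(m+1) * pqInt p q (k+1) + p^(k+1) * pqInt p q (m+1) := by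
    have h := pqInt_add p q (ne_of_gt hqp) (k+1) (m+1)
    rw [show k+1+(m+1) = k+m+2 by omega] at h
    exact h
  have f1 : pqFact p q (k+m+2) = pqFact p q (k+m+1) * pqInt p q (k+m+2) := by
    rw [pqFact, Finset.prod_range_succ]; rfl
  have f2 : pqFact p q (k+1) = pqFact p q k * pqInt p q (k+1) := by
    rw [pqFact, Finset.prod_range_succ]; rfl
  have f3 : pqFact p q (m+1) = pqFact p q m * pqInt p q (m+1) := by
    rw [pqFact, Finset.prod_range_succ]; rfl
  have n1 : pqFact p q k ≠ 0 := (pqFact_pos p q hq hqp k).ne'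
  have n2 : pqFact p q m ≠ 0 := (pqFact_pos p q hq hqp m).ne'
  have n3 : pqFact p q (k+m+1) ≠ 0 := (pqFact_pos p q hq hqp _).ne'
  have n4 : pqInt p q (k+1) ≠ 0 := (pqInt_pos p q hq hqp k).ne'
  have n5 : pqInt p q (m+1) ≠ 0 := (pqInt_pos p q hq hqp m).ne'
  rw [f1, f2, f3, hI]
  field_simp

lemma hstep (p q x : ℝ) (hq : 0 < q) (hqp : q < p) (k m : ℕ) :
    pqChoose p q (k+m+2) (k+1) * p^((k+1)*k/2) * x^(k+1) * ∏ s ∈ range (m+1), (p^s - q^s*x)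
    = (q^(m+1) * p^k * x *
        (pqChoose p q (k+m+1) k * p^(k*(k-1)/2) * x^k * ∏ s ∈ range (m+1), (p^s - q^s*x))
      - q^m * p^(k+1) * x *
        (pqChoose p q (k+m+1) (k+1) * p^((k+1)*k/2) * x^(k+1) * ∏ s ∈ range m, (p^s - q^s*x)))
    + p^(k+m+1) *
        (pqChoose p q (k+m+1) (k+1) * p^((k+1)*k/2) * x^(k+1) * ∏ s ∈ range m, (p^s - q^s*x)) := by
  rw [pascal p q hq hqp k m, Finset.prod_range_succ, tri k]
  ring

lemma key (p q x : ℝ) (hq : 0 < q) (hqp : q < p) (n : ℕ) :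
    ∑ k ∈ Finset.range (n+1),
      pqChoose p q n k * p^(k*(k-1)/2) * x^k * ∏ s ∈ Finset.range (n-k), (p^s - q^s*x)
    = p^(n*(n-1)/2) := by
  induction n with
  | zero => simp [pqChoose, pqFact]
  | succ n ih =>
    set g : ℕ → ℝ := fun k =>
      pqChoose p q n k * p^(k*(k-1)/2) * x^k * ∏ s ∈ Finset.range (n-k), (p^s - q^s*x) with hg
    set u : ℕ → ℝ := fun k => q^(n-k) * p^k * x * g k with hu
    have hT : ∀ k < n,
        pqChoose p q (n+1) (k+1) * p^((k+1)*((k+1)-1)/2) * x^(k+1) *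
          ∏ s ∈ Finset.range (n+1-(k+1)), (p^s - q^s*x)
        = (u k - u (k+1)) + p^n * g (k+1) := by
      intro k hk
      have hm : n = k + (n-k-1) + 1 := by omega
      set m := n - k - 1 with hmdef
      have h1 : n + 1 = k + m + 2 := by omega
      have h2 : n + 1 - (k+1) = m + 1 := by omega
      have h3 : (k+1)*((k+1)-1)/2 = (k+1)*k/2 := by simp
      have h4 : n - k = m + 1 := by omega
      have h5 : n - (k+1) = m := by omega
      rw [h3, h2, h1]
      simp only [hu, hg, h4, h5]
      calc pqChoose p q (k+m+2) (k+1) * p^((k+1)*k/2) * x^(k+1) *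
            ∏ s ∈ range (m+1), (p^s - q^s*x)
          = (q^(m+1) * p^k * x *
              (pqChoose p q (k+m+1) k * p^(k*(k-1)/2) * x^k * ∏ s ∈ range (m+1), (p^s - q^s*x))
            - q^m * p^(k+1) * x *
              (pqChoose p q (k+m+1) (k+1) * p^((k+1)*k/2) * x^(k+1) * ∏ s ∈ range m, (p^s - q^s*x)))
          + p^(k+m+1) *
              (pqChoose p q (k+m+1) (k+1) * p^((k+1)*k/2) * x^(k+1) * ∏ s ∈ range m, (p^s - q^s*x)) :=
            hstep p q x hq hqp k m
        _ = _ := by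
            rw [show k + m + 1 = n by omega]
            congr 1
    have hc0 : ∀ N, pqChoose p q N 0 = 1 := by
      intro N
      simp only [pqChoose, Nat.sub_zero, pqFact, Finset.prod_range_zero, one_mul]
      exact div_self (pqFact_pos p q hq hqp N).ne'
    have hcn : ∀ N, pqChoose p q N N = 1 := by
      intro N
      simp only [pqChoose, Nat.sub_self, pqFact, Finset.prod_range_zero, mul_one]
      exact div_self (pqFact_pos p q hq hqp N).ne'
    have hT0 : pqChoose p q (n+1) 0 * p^(0*(0-1)/2) * x^0 *
        ∏ s ∈ Finset.range (n+1-0), (p^s - q^s*x) = p^n * g 0 - u 0 := by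
      simp only [hc0, Nat.sub_zero, pow_zero, one_mul, mul_one, hu, hg]
      rw [Finset.prod_range_succ]
      ring
    have hTn : pqChoose p q (n+1) (n+1) * p^((n+1)*((n+1)-1)/2) * x^(n+1) *
        ∏ s ∈ Finset.range (n+1-(n+1)), (p^s - q^s*x) = u n := by
      simp only [hcn, Nat.sub_self, Finset.prod_range_zero, one_mul, mul_one, hu, hg,
        Nat.add_sub_cancel, pow_zero]
      rw [tri n, pow_add]
      ring
    rw [Finset.sum_range_succ, Finset.sum_range_succ']
    rw [Finset.sum_congr rfl (fun k hk => hT k (Finset.mem_range.mp hk)), hT0, hTn]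
    rw [Finset.sum_add_distrib, Finset.sum_range_sub' u, ← Finset.mul_sum]
    have hsg : ∑ k ∈ Finset.range (n+1), g k = p^(n*(n-1)/2) := ih
    have hsg' : ∑ k ∈ Finset.range n, g (k+1) = p^(n*(n-1)/2) - g 0 := by
      have := Finset.sum_range_succ' g n
      rw [hsg] at this
      linarith [this]
    rw [hsg']
    rw [show (n+1)*((n+1)-1)/2 = n*(n-1)/2 + n by simpa using tri n, pow_add]
    ring

theorem pqBasis_sum_eq_one (p q : ℝ) (hq : 0 < q) (hqp : q < p) (hp : p ≤ 1)
    (n : ℕ) (hn : 1 ≤ n) (x : ℝ) (hx : x ∈ Set.Icc (0 : ℝ) 1) :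
    ∑ k ∈ Finset.range (n + 1), pqBasis p q n k x = 1 := by
  have hp0 : (0:ℝ) < p := hq.trans hqp
  have h1 : ∑ k ∈ Finset.range (n+1), pqBasis p q n k x
      = (1 / p ^ (n*(n-1)/2)) * ∑ k ∈ Finset.range (n+1),
          pqChoose p q n k * p^(k*(k-1)/2) * x^k * ∏ s ∈ Finset.range (n-k), (p^s - q^s*x) := by
    rw [Finset.mul_sum]
    exact Finset.sum_congr rfl (fun k _ => by simp only [pqBasis]; ring)
  rw [h1, key p q x hq hqp]
  field_simp
end

section
/- Let (p_n) and (q_n) be sequences with 0 < q_n < p_n ≤ 1, p_n → 1, q_n → 1, p_n^n → 1, and q_n^n → 1. Then [n]_{p_n,q_n} → ∞ as n → ∞. -/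
open Finset Filter

theorem pq_int_tendsto_atTop (p q : ℕ → ℝ)
    (h : ∀ n, 0 < q n ∧ q n < p n ∧ p n ≤ 1)
    (hp : Tendsto p atTop (nhds 1)) (hq : Tendsto q atTop (nhds 1))
    (hpn : Tendsto (fun n => p n ^ n) atTop (nhds 1))
    (hqn : Tendsto (fun n => q n ^ n) atTop (nhds 1)) :
    Tendsto (fun n => pqInt (p n) (q n) n) atTop atTop := by
  have key : Tendsto (fun n : ℕ => (n : ℝ) * q n ^ n) atTop atTop :=
    Tendsto.atTop_mul_pos (by norm_num) tendsto_natCast_atTop_atTop hqn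
  refine tendsto_atTop_mono (fun n => ?_) key
  obtain ⟨hq0, hqp, hp1⟩ := h n
  have hq1 : q n ≤ 1 := le_trans hqp.le hp1
  have h1 : (n : ℝ) * q n ^ n = ∑ _i ∈ Finset.range n, q n ^ n := by
    rw [Finset.sum_const, nsmul_eq_mul, Finset.card_range]
  rw [h1]
  unfold pqInt
  refine Finset.sum_le_sum fun i hi => ?_
  have hin : i < n := Finset.mem_range.mp hi
  have e1 : q n ^ (n - 1 - i) * q n ^ i = q n ^ (n - 1) := by
    rw [← pow_add]
    congr 1
    omega
  calc q n ^ n ≤ q n ^ (n - 1) := pow_le_pow_of_le_one hq0.le hq1 (by omega)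
    _ = q n ^ (n - 1 - i) * q n ^ i := e1.symm
    _ ≤ p n ^ (n - 1 - i) * q n ^ i := by gcongr
end

section
/- Let (p_n), (q_n) satisfy 0 < q_n < p_n ≤ 1, p_n → 1, q_n → 1, p_n^n → 1, q_n^n → 1, and let α, β ≥ 0. Then sup_{x ∈ [0,1]} |S_{n,p_n,q_n}(t²; x) - x²| → 0 as n → ∞, where S_{n,p,q}(t²; x) = (q[n]_{p,q}[n-1]_{p,q} x² + [n]_{p,q}(2α + p^{n-1}) x + α²)/([n]_{p,q} + β)². -/
open Finset Filter

lemma pqInt_succ_id (p q : ℝ) (m : ℕ) :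
    pqInt p q (m + 1) = q * pqInt p q m + p ^ m := by
  simp only [pqInt]
  rw [Finset.sum_range_succ']
  simp only [Nat.add_sub_cancel, Nat.sub_zero, pow_zero, mul_one, Finset.mul_sum]
  congr 1
  apply Finset.sum_congr rfl
  intro i _
  have h2 : m - (i + 1) = m - 1 - i := by omega
  rw [h2]
  ring

lemma pqInt_lb (p q : ℝ) (n : ℕ) (hq : 0 < q) (hqp : q < p) (hp1 : p ≤ 1) :
    (n : ℝ) * (p ^ n * q ^ n) ≤ pqInt p q n := by
  have hp0 : 0 < p := lt_trans hq hqp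
  have := Finset.card_nsmul_le_sum (Finset.range n)
    (fun i => p ^ (n - 1 - i) * q ^ i) (p ^ n * q ^ n) ?_
  · simpa [pqInt, nsmul_eq_mul] using this
  · intro i hi
    have hi' : i < n := Finset.mem_range.mp hi
    apply mul_le_mul
    · exact pow_le_pow_of_le_one hp0.le hp1 (by omega)
    · exact pow_le_pow_of_le_one hq.le (le_of_lt (lt_of_lt_of_le hqp hp1)) (by omega)
    · positivity
    · positivity

lemma pqInt_nonneg (p q : ℝ) (n : ℕ) (hp : 0 ≤ p) (hq : 0 ≤ q) : 0 ≤ pqInt p q n := by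
  apply Finset.sum_nonneg
  intro i _
  positivity

theorem korovkin_second_moment (p q : ℕ → ℝ) (α β : ℝ)
    (h : ∀ n, 0 < q n ∧ q n < p n ∧ p n ≤ 1)
    (hp : Tendsto p atTop (nhds 1)) (hq : Tendsto q atTop (nhds 1))
    (hpn : Tendsto (fun n => p n ^ n) atTop (nhds 1))
    (hqn : Tendsto (fun n => q n ^ n) atTop (nhds 1))
    (hα : 0 ≤ α) (hβ : 0 ≤ β) :
    Tendsto (fun n => ⨆ x : Set.Icc (0 : ℝ) 1,
      |(q n * pqInt (p n) (q n) n * pqInt (p n) (q n) (n - 1) * (x : ℝ) ^ 2 +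
          pqInt (p n) (q n) n * (2 * α + (p n) ^ (n - 1)) * (x : ℝ) + α ^ 2) /
          (pqInt (p n) (q n) n + β) ^ 2 - (x : ℝ) ^ 2|)
      atTop (nhds 0) := by
  haveI : Nonempty (Set.Icc (0 : ℝ) 1) := ⟨⟨0, by norm_num⟩⟩
  set A : ℕ → ℝ := fun n => pqInt (p n) (q n) n with hAdef
  have hq0 : ∀ n, 0 < q n := fun n => (h n).1
  have hp0 : ∀ n, 0 < p n := fun n => lt_trans (h n).1 (h n).2.1
  have hp1 : ∀ n, p n ≤ 1 := fun n => (h n).2.2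
  have hq1 : ∀ n, q n ≤ 1 := fun n => le_of_lt (lt_of_lt_of_le (h n).2.1 (h n).2.2)
  -- A tends to atTop
  have hAtop : Tendsto A atTop atTop := by
    apply tendsto_atTop_mono (fun n => pqInt_lb (p n) (q n) n (hq0 n) (h n).2.1 (hp1 n))
    exact Filter.Tendsto.atTop_mul_pos one_pos tendsto_natCast_atTop_atTop
      (by simpa using hpn.mul hqn)
  -- the bounding sequence
  set g : ℕ → ℝ := fun n => ((2 + 2 * β + 2 * α) * A n + β ^ 2 + α ^ 2) / (A n) ^ 2 with hgdef
  have hA2top : Tendsto (fun n => (A n) ^ 2) atTop atTop := by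
    simpa [sq] using hAtop.atTop_mul_atTop₀ hAtop
  have hg0 : Tendsto g atTop (nhds 0) := by
    have h1 : Tendsto (fun n => (2 + 2 * β + 2 * α) / A n) atTop (nhds 0) :=
      tendsto_const_nhds.div_atTop hAtop
    have h2 : Tendsto (fun n => (β ^ 2 + α ^ 2) / (A n) ^ 2) atTop (nhds 0) :=
      tendsto_const_nhds.div_atTop hA2top
    have heq : ∀ᶠ n in atTop, (fun n => (2 + 2 * β + 2 * α) / A n + (β ^ 2 + α ^ 2) / (A n) ^ 2) n = g n := by
      filter_upwards [hAtop.eventually_gt_atTop 0] with n hn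
      simp only [hgdef]
      field_simp [hgdef]
      ring
    have h3 := h1.add h2
    rw [add_zero] at h3
    exact Tendsto.congr' heq h3
  refine tendsto_of_tendsto_of_tendsto_of_le_of_le' tendsto_const_nhds hg0 ?_ ?_
  · filter_upwards with n
    exact Real.iSup_nonneg fun x => abs_nonneg _
  · filter_upwards [eventually_ge_atTop 1, hAtop.eventually_gt_atTop 0] with n hn hApos
    apply ciSup_le
    rintro ⟨x, hx0, hx1⟩
    simp only
    set P : ℝ := (p n) ^ (n - 1) with hPdef
    have hP0 : 0 < P := pow_pos (hp0 n) _
    have hP1 : P ≤ 1 := pow_le_one₀ (hp0 n).le (hp1 n)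
    -- the identity
    have hid : q n * pqInt (p n) (q n) (n - 1) = A n - P := by
      obtain ⟨m, rfl⟩ := Nat.exists_eq_add_of_le hn
      have := pqInt_succ_id (p (1 + m)) (q (1 + m)) m
      simp only [hAdef, hPdef]
      have hm : 1 + m - 1 = m := by omega
      rw [hm, show 1 + m = m + 1 by ring] at *
      linarith [pqInt_succ_id (p (m+1)) (q (m+1)) m]
    have hden : (0 : ℝ) < A n + β := by linarith
    have hkey : (q n * A n * pqInt (p n) (q n) (n - 1) * x ^ 2 +
          A n * (2 * α + P) * x + α ^ 2) / (A n + β) ^ 2 - x ^ 2 =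
        (-(A n * P + 2 * β * A n + β ^ 2) * x ^ 2 + A n * (2 * α + P) * x + α ^ 2) /
          (A n + β) ^ 2 := by
      have h1 : q n * A n * pqInt (p n) (q n) (n - 1) = A n * (A n - P) := by
        rw [mul_comm (q n) (A n), mul_assoc, hid]
      rw [h1]
      field_simp
      ring
    rw [hkey, abs_div, abs_of_pos (by positivity : (0:ℝ) < (A n + β) ^ 2)]
    have hx2 : x ^ 2 ≤ 1 := by nlinarith
    have ha1 : 0 ≤ A n * P + 2 * β * A n + β ^ 2 := by
      have := mul_nonneg hApos.le hP0.le
      have := mul_nonneg hβ hApos.le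
      nlinarith
    have hb0 : 0 ≤ A n * (2 * α + P) := mul_nonneg hApos.le (by linarith)
    have hAP : A n * P ≤ A n := by nlinarith
    have hnum : |(-(A n * P + 2 * β * A n + β ^ 2) * x ^ 2 + A n * (2 * α + P) * x + α ^ 2)| ≤
        (2 + 2 * β + 2 * α) * A n + β ^ 2 + α ^ 2 := by
      rw [abs_le]
      constructor <;>
        nlinarith [mul_nonneg ha1 (by linarith : (0:ℝ) ≤ 1 - x ^ 2),
          mul_nonneg ha1 (sq_nonneg x), mul_nonneg hb0 hx0,
          mul_nonneg hb0 (by linarith : (0:ℝ) ≤ 1 - x),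
          mul_nonneg hα hApos.le]
    calc |(-(A n * P + 2 * β * A n + β ^ 2) * x ^ 2 + A n * (2 * α + P) * x + α ^ 2)| /
          (A n + β) ^ 2
        ≤ ((2 + 2 * β + 2 * α) * A n + β ^ 2 + α ^ 2) / (A n) ^ 2 := by
          apply div_le_div₀ (by positivity) hnum (by positivity)
          nlinarith
      _ = g n := rfl
end
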